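/- Suppose the first partial trace of W(ρ⊗σ)W† equals the second partial trace of W(ρ⊗σ)W† for all inputs (i.e., the convolution channel equals its complementary channel). Then for any such unitary W and density operators ρ, σ, the convolution ρ ⊠ σ := Tr_2[W(ρ⊗σ)W†] satisfies S(ρ ⊠ σ) ≥ (S(ρ) + S(σ))/2. -/

import Mathlib

open Matrix Kronecker ComplexOrder

/-- Von Neumann entropy of a (Hermitian) matrix, via its eigenvalues. -/
noncomputable def vnEntropy {m : Type*} [Fintype m] [DecidableEq m]
    (ρ : Matrix m m ℂ) : ℝ :=
  if h : ρ.IsHermitian then ∑ i, Real.negMulLog (h.eigenvalues i) else 0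

/-- Partial trace over the second tensor factor. -/
noncomputable def ptr2 {A B : Type*} [Fintype A] [Fintype B]
    (ρ : Matrix (A × B) (A × B) ℂ) : Matrix A A ℂ :=
  fun a a' => ∑ b : B, ρ (a, b) (a', b)

/-- Partial trace over the first tensor factor. -/
noncomputable def ptr1 {A B : Type*} [Fintype A] [Fintype B]
    (ρ : Matrix (A × B) (A × B) ℂ) : Matrix B B ℂ :=
  fun b b' => ∑ a : A, ρ (a, b) (a, b')

set_option linter.unusedSectionVars false
set_option maxHeartbeats 1000000

section helpers
open Real

/-- Gibbs-type inequality / Klein inequality, classical core. -/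
lemma classical_key {K M : Type*} [Fintype K] [Fintype M]
    (t : K → ℝ) (r : M → ℝ) (c : K → M → ℝ)
    (ht : ∀ k, 0 ≤ t k) (hr : ∀ m, 0 ≤ r m) (hc : ∀ k m, 0 ≤ c k m)
    (hrow : ∀ k, ∑ m, c k m = 1) (hcol : ∀ m, ∑ k, c k m ≤ 1)
    (hsupp : ∀ m, r m = 0 → ∀ k, t k * c k m = 0)
    (htsum : ∑ k, t k = 1) (hrsum : ∑ m, r m ≤ 1) :
    ∑ k, negMulLog (t k) ≤ ∑ m, (∑ k, t k * c k m) * (- Real.log (r m)) := by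
  have key : ∀ k, negMulLog (t k) + ∑ m, t k * c k m * Real.log (r m)
      ≤ ∑ m, c k m * r m - t k := by
    intro k
    rcases eq_or_lt_of_le (ht k) with h0 | hpos
    · simp only [← h0, negMulLog_zero, zero_mul, Finset.sum_const_zero, add_zero, sub_zero]
      exact Finset.sum_nonneg fun m _ => mul_nonneg (hc k m) (hr m)
    · have hte : negMulLog (t k) = ∑ m, c k m * (-(t k * Real.log (t k))) := by
        rw [← Finset.sum_mul, hrow k, one_mul, negMulLog, neg_mul]
      have htk : ∑ m, c k m * r m - t k = ∑ m, (c k m * r m - c k m * t k) := by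
        rw [Finset.sum_sub_distrib, ← Finset.sum_mul, hrow k, one_mul]
      rw [hte, ← Finset.sum_add_distrib, htk]
      apply Finset.sum_le_sum
      intro m _
      rcases eq_or_lt_of_le (hc k m) with hc0 | hcpos
      · simp [← hc0]
      · have hrm : 0 < r m := by
          rcases eq_or_lt_of_le (hr m) with h | h
          · exfalso
            have := hsupp m h.symm k
            nlinarith
          · exact h
        have hlog : Real.log (r m) - Real.log (t k) ≤ r m / t k - 1 := by
          rw [← Real.log_div (ne_of_gt hrm) (ne_of_gt hpos)]
          exact Real.log_le_sub_one_of_pos (div_pos hrm hpos)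
        have : t k * (Real.log (r m) - Real.log (t k)) ≤ r m - t k := by
          have := mul_le_mul_of_nonneg_left hlog (le_of_lt hpos)
          calc t k * (Real.log (r m) - Real.log (t k))
              ≤ t k * (r m / t k - 1) := this
            _ = r m - t k := by field_simp
        nlinarith [hc k m]
  calc ∑ k, negMulLog (t k)
      = ∑ k, (negMulLog (t k) + ∑ m, t k * c k m * Real.log (r m))
        - ∑ k, ∑ m, t k * c k m * Real.log (r m) := by
          rw [Finset.sum_add_distrib]; ring
    _ ≤ (∑ k, (∑ m, c k m * r m - t k))
        - ∑ k, ∑ m, t k * c k m * Real.log (r m) := by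
          have := Finset.sum_le_sum (fun k (_ : k ∈ Finset.univ) => key k)
          linarith
    _ ≤ 0 - ∑ k, ∑ m, t k * c k m * Real.log (r m) := by
          have h1 : ∑ k, (∑ m, c k m * r m - t k)
              = (∑ m, (∑ k, c k m) * r m) - 1 := by
            rw [Finset.sum_sub_distrib, htsum, Finset.sum_comm]
            simp_rw [Finset.sum_mul]
          have h2 : ∑ m, (∑ k, c k m) * r m ≤ ∑ m, r m := by
            apply Finset.sum_le_sum
            intro m _
            calc (∑ k, c k m) * r m ≤ 1 * r m :=
                  mul_le_mul_of_nonneg_right (hcol m) (hr m)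
              _ = r m := one_mul _
          linarith
    _ = ∑ m, (∑ k, t k * c k m) * (- Real.log (r m)) := by
          rw [Finset.sum_comm]
          simp_rw [Finset.sum_mul, zero_sub, ← Finset.sum_neg_distrib]
          congr 1; funext m; congr 1; funext k; ring

lemma marginal_sum {I J : Type*} [Fintype I] [Fintype J]
    (q : I × J → ℝ) (a : I → ℝ) (b : J → ℝ)
    (hq : ∀ m, 0 ≤ q m)
    (ha : ∀ i, ∑ j, q (i, j) = a i) (hb : ∀ j, ∑ i, q (i, j) = b j) :
    ∑ m : I × J, q m * (- Real.log (a m.1 * b m.2))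
      = ∑ i, negMulLog (a i) + ∑ j, negMulLog (b j) := by
  have split : ∀ m : I × J, q m * (- Real.log (a m.1 * b m.2))
      = q m * (- Real.log (a m.1)) + q m * (- Real.log (b m.2)) := by
    intro m
    rcases eq_or_lt_of_le (hq m) with h0 | hpos
    · simp [← h0]
    · have hai : 0 < a m.1 := by
        rw [← ha m.1]
        have : q (m.1, m.2) ≤ ∑ j, q (m.1, j) :=
          Finset.single_le_sum (fun j _ => hq (m.1, j)) (Finset.mem_univ m.2)
        calc (0:ℝ) < q m := hpos
          _ = q (m.1, m.2) := by rw [Prod.mk.eta]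
          _ ≤ _ := this
      have hbj : 0 < b m.2 := by
        rw [← hb m.2]
        have : q (m.1, m.2) ≤ ∑ i, q (i, m.2) :=
          Finset.single_le_sum (fun i _ => hq (i, m.2)) (Finset.mem_univ m.1)
        calc (0:ℝ) < q m := hpos
          _ = q (m.1, m.2) := by rw [Prod.mk.eta]
          _ ≤ _ := this
      rw [Real.log_mul (ne_of_gt hai) (ne_of_gt hbj)]
      ring
  simp_rw [split, Finset.sum_add_distrib]
  congr 1
  · rw [Fintype.sum_prod_type]
    simp_rw [← Finset.sum_mul]
    congr 1; funext i
    rw [ha i, negMulLog, neg_mul]; ring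
  · rw [Fintype.sum_prod_type_right]
    simp_rw [← Finset.sum_mul]
    congr 1; funext j
    rw [hb j, negMulLog, neg_mul]; ring
variable {A B : Type*} [Fintype A] [Fintype B] [DecidableEq A] [DecidableEq B]

lemma ptr2_trace (τ : Matrix (A × B) (A × B) ℂ) : (ptr2 τ).trace = τ.trace := by
  simp [ptr2, Matrix.trace, Matrix.diag, Fintype.sum_prod_type]

lemma ptr1_trace (τ : Matrix (A × B) (A × B) ℂ) : (ptr1 τ).trace = τ.trace := by
  simp only [ptr1, Matrix.trace, Matrix.diag, Fintype.sum_prod_type]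
  rw [Finset.sum_comm]

lemma star_kronecker (P : Matrix A A ℂ) (Q : Matrix B B ℂ) :
    star (P ⊗ₖ Q) = star P ⊗ₖ star Q := by
  ext ⟨i, j⟩ ⟨i', j'⟩
  simp [Matrix.star_apply, kroneckerMap_apply, mul_comm]

lemma kron_mem_unitaryGroup {P : Matrix A A ℂ} {Q : Matrix B B ℂ}
    (hP : P ∈ Matrix.unitaryGroup A ℂ) (hQ : Q ∈ Matrix.unitaryGroup B ℂ) :
    P ⊗ₖ Q ∈ Matrix.unitaryGroup (A × B) ℂ := by
  rw [Matrix.mem_unitaryGroup_iff]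
  rw [star_kronecker, ← mul_kronecker_mul, Matrix.mem_unitaryGroup_iff.mp hP,
    Matrix.mem_unitaryGroup_iff.mp hQ, one_kronecker_one]

lemma ptr2_kron_one_mul (M : Matrix A A ℂ) (τ : Matrix (A × B) (A × B) ℂ) :
    ptr2 ((M ⊗ₖ (1 : Matrix B B ℂ)) * τ) = M * ptr2 τ := by
  ext a a'
  simp [ptr2, Matrix.mul_apply, Fintype.sum_prod_type, Matrix.one_apply, Finset.mul_sum]
  rw [Finset.sum_comm]

lemma ptr2_mul_kron_one (M : Matrix A A ℂ) (τ : Matrix (A × B) (A × B) ℂ) :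
    ptr2 (τ * (M ⊗ₖ (1 : Matrix B B ℂ))) = ptr2 τ * M := by
  ext a a'
  simp [ptr2, Matrix.mul_apply, Fintype.sum_prod_type, Matrix.one_apply, Finset.sum_mul]
  rw [Finset.sum_comm]

lemma ptr2_one_kron_comm (N : Matrix B B ℂ) (τ : Matrix (A × B) (A × B) ℂ) :
    ptr2 (((1 : Matrix A A ℂ) ⊗ₖ N) * τ) = ptr2 (τ * ((1 : Matrix A A ℂ) ⊗ₖ N)) := by
  ext a a'
  simp [ptr2, Matrix.mul_apply, Fintype.sum_prod_type, Matrix.one_apply, Finset.sum_mul,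
    Finset.mul_sum]
  conv_rhs => rw [Finset.sum_comm]
  exact Finset.sum_congr rfl fun y _ => Finset.sum_congr rfl fun x _ => mul_comm _ _

lemma ptr1_one_kron_mul (N : Matrix B B ℂ) (τ : Matrix (A × B) (A × B) ℂ) :
    ptr1 (((1 : Matrix A A ℂ) ⊗ₖ N) * τ) = N * ptr1 τ := by
  ext b b'
  simp [ptr1, Matrix.mul_apply, Fintype.sum_prod_type, Matrix.one_apply, Finset.mul_sum]
  rw [Finset.sum_comm]

lemma ptr1_mul_one_kron (N : Matrix B B ℂ) (τ : Matrix (A × B) (A × B) ℂ) :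
    ptr1 (τ * ((1 : Matrix A A ℂ) ⊗ₖ N)) = ptr1 τ * N := by
  ext b b'
  simp [ptr1, Matrix.mul_apply, Fintype.sum_prod_type, Matrix.one_apply, Finset.sum_mul]
  rw [Finset.sum_comm]

lemma ptr1_kron_one_comm (M : Matrix A A ℂ) (τ : Matrix (A × B) (A × B) ℂ) :
    ptr1 ((M ⊗ₖ (1 : Matrix B B ℂ)) * τ) = ptr1 (τ * (M ⊗ₖ (1 : Matrix B B ℂ))) := by
  ext b b'
  simp [ptr1, Matrix.mul_apply, Fintype.sum_prod_type, Matrix.one_apply, Finset.sum_mul,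
    Finset.mul_sum]
  conv_rhs => rw [Finset.sum_comm]
  exact Finset.sum_congr rfl fun y _ => Finset.sum_congr rfl fun x _ => mul_comm _ _

lemma ptr2_conj (τ : Matrix (A × B) (A × B) ℂ) {P : Matrix A A ℂ} {Q : Matrix B B ℂ}
    (hQ : Q * star Q = 1) :
    ptr2 (star (P ⊗ₖ Q) * τ * (P ⊗ₖ Q)) = star P * ptr2 τ * P := by
  have E1 : star (P ⊗ₖ Q) * τ * (P ⊗ₖ Q)
      = (star P ⊗ₖ (1 : Matrix B B ℂ))
        * ((((1 : Matrix A A ℂ) ⊗ₖ star Q) * τ * ((1 : Matrix A A ℂ) ⊗ₖ Q))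
        * (P ⊗ₖ (1 : Matrix B B ℂ))) := by
    rw [star_kronecker]
    rw [show (star P ⊗ₖ star Q : Matrix (A × B) (A × B) ℂ)
        = (star P ⊗ₖ (1 : Matrix B B ℂ)) * ((1 : Matrix A A ℂ) ⊗ₖ star Q) by
      rw [← mul_kronecker_mul, mul_one, one_mul]]
    rw [show (P ⊗ₖ Q : Matrix (A × B) (A × B) ℂ)
        = ((1 : Matrix A A ℂ) ⊗ₖ Q) * (P ⊗ₖ (1 : Matrix B B ℂ)) by
      rw [← mul_kronecker_mul, mul_one, one_mul]]
    simp only [Matrix.mul_assoc]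
  rw [E1, ptr2_kron_one_mul, ptr2_mul_kron_one, ← Matrix.mul_assoc]
  congr 2
  rw [Matrix.mul_assoc, ptr2_one_kron_comm, Matrix.mul_assoc, ← mul_kronecker_mul, hQ,
    one_mul, one_kronecker_one, Matrix.mul_one]

lemma ptr1_conj (τ : Matrix (A × B) (A × B) ℂ) {P : Matrix A A ℂ} {Q : Matrix B B ℂ}
    (hP : P * star P = 1) :
    ptr1 (star (P ⊗ₖ Q) * τ * (P ⊗ₖ Q)) = star Q * ptr1 τ * Q := by
  have E1 : star (P ⊗ₖ Q) * τ * (P ⊗ₖ Q)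
      = ((1 : Matrix A A ℂ) ⊗ₖ star Q)
        * (((star P ⊗ₖ (1 : Matrix B B ℂ)) * τ * (P ⊗ₖ (1 : Matrix B B ℂ)))
        * ((1 : Matrix A A ℂ) ⊗ₖ Q)) := by
    rw [star_kronecker]
    rw [show (star P ⊗ₖ star Q : Matrix (A × B) (A × B) ℂ)
        = ((1 : Matrix A A ℂ) ⊗ₖ star Q) * (star P ⊗ₖ (1 : Matrix B B ℂ)) by
      rw [← mul_kronecker_mul, mul_one, one_mul]]
    rw [show (P ⊗ₖ Q : Matrix (A × B) (A × B) ℂ)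
        = (P ⊗ₖ (1 : Matrix B B ℂ)) * ((1 : Matrix A A ℂ) ⊗ₖ Q) by
      rw [← mul_kronecker_mul, mul_one, one_mul]]
    simp only [Matrix.mul_assoc]
  rw [E1, ptr1_one_kron_mul, ptr1_mul_one_kron, ← Matrix.mul_assoc]
  congr 2
  rw [Matrix.mul_assoc, ptr1_kron_one_comm, Matrix.mul_assoc, ← mul_kronecker_mul, hP,
    mul_one, one_kronecker_one, Matrix.mul_one]

lemma ptr2_posSemidef {τ : Matrix (A × B) (A × B) ℂ} (hτ : τ.PosSemidef) :
    (ptr2 τ).PosSemidef := by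
  refine Matrix.PosSemidef.of_dotProduct_mulVec_nonneg ?_ ?_
  · have h := hτ.1
    ext a a'
    simp only [conjTranspose_apply, ptr2, star_sum]
    apply Finset.sum_congr rfl
    intro b _
    calc star (τ (a', b) (a, b)) = τᴴ (a, b) (a', b) := rfl
      _ = τ (a, b) (a', b) := by rw [h]
  · intro x
    have key : dotProduct (star x) (ptr2 τ *ᵥ x)
        = ∑ b : B, dotProduct (star (fun p : A × B => if p.2 = b then x p.1 else 0))
            (τ *ᵥ (fun p : A × B => if p.2 = b then x p.1 else 0)) := by
      simp only [dotProduct, mulVec, ptr2, Pi.star_apply, Fintype.sum_prod_type,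
        apply_ite (star : ℂ → ℂ), star_zero, ite_mul, zero_mul, mul_ite, mul_zero,
        Finset.sum_ite_eq', Finset.mem_univ, if_true, Finset.sum_mul, Finset.mul_sum]
      calc ∑ a : A, ∑ a' : A, ∑ b : B, star (x a) * (τ (a, b) (a', b) * x a')
          = ∑ a : A, ∑ b : B, ∑ a' : A, star (x a) * (τ (a, b) (a', b) * x a') :=
            Finset.sum_congr rfl fun a _ => Finset.sum_comm
        _ = ∑ b : B, ∑ a : A, ∑ a' : A, star (x a) * (τ (a, b) (a', b) * x a') :=
            Finset.sum_comm
        _ = ∑ b : B, ∑ a : A, ∑ c : B, ∑ a' : A,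
              if c = b then star (x a) * (τ (a, c) (a', b) * x a') else 0 := by
            apply Finset.sum_congr rfl; intro b _
            apply Finset.sum_congr rfl; intro a _
            rw [Finset.sum_comm]
            simp only [Finset.sum_ite_eq', Finset.mem_univ, if_true]
    rw [key]
    exact Finset.sum_nonneg fun b _ => hτ.dotProduct_mulVec_nonneg _

lemma ptr1_posSemidef {τ : Matrix (A × B) (A × B) ℂ} (hτ : τ.PosSemidef) :
    (ptr1 τ).PosSemidef := by
  refine Matrix.PosSemidef.of_dotProduct_mulVec_nonneg ?_ ?_
  · have h := hτ.1
    ext b b'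
    simp only [conjTranspose_apply, ptr1, star_sum]
    apply Finset.sum_congr rfl
    intro a _
    calc star (τ (a, b') (a, b)) = τᴴ (a, b) (a, b') := rfl
      _ = τ (a, b) (a, b') := by rw [h]
  · intro x
    have key : dotProduct (star x) (ptr1 τ *ᵥ x)
        = ∑ a : A, dotProduct (star (fun p : A × B => if p.1 = a then x p.2 else 0))
            (τ *ᵥ (fun p : A × B => if p.1 = a then x p.2 else 0)) := by
      simp only [dotProduct, mulVec, ptr1, Pi.star_apply, Fintype.sum_prod_type,
        apply_ite (star : ℂ → ℂ), star_zero, ite_mul, zero_mul, mul_ite, mul_zero,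
        Finset.sum_ite_eq', Finset.mem_univ, if_true, Finset.sum_mul, Finset.mul_sum]
      calc ∑ b : B, ∑ b' : B, ∑ a : A, star (x b) * (τ (a, b) (a, b') * x b')
          = ∑ b : B, ∑ a : A, ∑ b' : B, star (x b) * (τ (a, b) (a, b') * x b') :=
            Finset.sum_congr rfl fun b _ => Finset.sum_comm
        _ = ∑ a : A, ∑ b : B, ∑ b' : B, star (x b) * (τ (a, b) (a, b') * x b') :=
            Finset.sum_comm
        _ = ∑ a : A, ∑ c : A, ∑ b : B, ∑ c' : A, ∑ b' : B,
              if c' = a then (if c = a then star (x b) * (τ (c, b) (c', b') * x b') else 0)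
                else 0 := by
            apply Finset.sum_congr rfl; intro a _
            rw [Finset.sum_eq_single_of_mem a (Finset.mem_univ a)]
            · simp only [if_pos rfl]
              apply Finset.sum_congr rfl; intro b _
              rw [Finset.sum_comm]
              simp only [Finset.sum_ite_eq', Finset.mem_univ, if_true]
            · intro c _ hc
              simp [hc]
    rw [key]
    exact Finset.sum_nonneg fun a _ => hτ.dotProduct_mulVec_nonneg _

lemma diag_nonneg_of_posSemidef {n : Type*} [Fintype n] [DecidableEq n]
    {M : Matrix n n ℂ} (h : M.PosSemidef) (i : n) : 0 ≤ M i i := by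
  have := h.dotProduct_mulVec_nonneg (Pi.single i 1)
  simpa [dotProduct, Pi.single_apply, mulVec] using this

lemma trace_eq_sum_eigenvalues {n : Type*} [Fintype n] [DecidableEq n]
    {M : Matrix n n ℂ} (h : M.IsHermitian) :
    M.trace = ∑ i, (h.eigenvalues i : ℂ) := by
  conv_lhs => rw [h.spectral_theorem, Unitary.conjStarAlgAut_apply]
  rw [Matrix.trace_mul_cycle, Matrix.mem_unitaryGroup_iff'.mp h.eigenvectorUnitary.2,
    one_mul, Matrix.trace_diagonal]
  rfl

end helpers

open Real

/-- If the convolution channel agrees with its complementary channel, the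
entropy of the convolution dominates the average entropy of the inputs. -/
theorem entropy_convolution_ge_average
    {A : Type*} [Fintype A] [DecidableEq A]
    (ρ σ : Matrix A A ℂ)
    (hρ : ρ.PosSemidef) (hσ : σ.PosSemidef)
    (hρ1 : ρ.trace = 1) (hσ1 : σ.trace = 1)
    (W : Matrix (A × A) (A × A) ℂ) (hW : W ∈ Matrix.unitaryGroup (A × A) ℂ)
    (hcompl : ptr1 (W * (ρ ⊗ₖ σ) * star W) = ptr2 (W * (ρ ⊗ₖ σ) * star W)) :
    (vnEntropy ρ + vnEntropy σ) / 2 ≤ vnEntropy (ptr2 (W * (ρ ⊗ₖ σ) * star W)) := by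
  classical
  have hρH : ρ.IsHermitian := hρ.1
  have hσH : σ.IsHermitian := hσ.1
  set p : A → ℝ := hρH.eigenvalues with hp_def
  set q : A → ℝ := hσH.eigenvalues with hq_def
  set U1 : Matrix A A ℂ := (hρH.eigenvectorUnitary : Matrix A A ℂ) with hU1_def
  set U2 : Matrix A A ℂ := (hσH.eigenvectorUnitary : Matrix A A ℂ) with hU2_def
  have hU1 : U1 ∈ Matrix.unitaryGroup A ℂ := hρH.eigenvectorUnitary.2
  have hU2 : U2 ∈ Matrix.unitaryGroup A ℂ := hσH.eigenvectorUnitary.2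
  set t : A × A → ℝ := fun k => p k.1 * q k.2 with ht_def
  set D : Matrix (A × A) (A × A) ℂ := diagonal (fun m : A × A => ((t m : ℝ) : ℂ)) with hD_def
  set τ : Matrix (A × A) (A × A) ℂ := W * (ρ ⊗ₖ σ) * star W with hτ_def
  set Wm : Matrix (A × A) (A × A) ℂ := W * (U1 ⊗ₖ U2) with hWm_def
  have hWm : Wm ∈ Matrix.unitaryGroup (A × A) ℂ :=
    mul_mem hW (kron_mem_unitaryGroup hU1 hU2)
  -- τ = Wm * D * star Wm
  have hkron_eq : ρ ⊗ₖ σ = (U1 ⊗ₖ U2) * D * star (U1 ⊗ₖ U2) := by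
    conv_lhs => rw [hρH.spectral_theorem, hσH.spectral_theorem, Unitary.conjStarAlgAut_apply,
      Unitary.conjStarAlgAut_apply]
    rw [← hU1_def, ← hU2_def, mul_kronecker_mul, mul_kronecker_mul, star_kronecker,
      diagonal_kronecker_diagonal]
    have hDD : D = diagonal (fun mn : A × A =>
        (↑(hρH.eigenvalues mn.1) : ℂ) * ↑(hσH.eigenvalues mn.2)) := by
      rw [hD_def]
      congr 1
      funext mn
      simp [ht_def]
      rfl
    rw [hDD]
    rfl
  have hτ_eq : τ = Wm * D * star Wm := by
    rw [hτ_def, hkron_eq, hWm_def, StarMul.star_mul]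
    simp only [Matrix.mul_assoc]
  have hτPSD : τ.PosSemidef := by
    have hD : D.PosSemidef := by
      rw [hD_def]
      refine Matrix.PosSemidef.diagonal ?_
      intro m
      have : (0:ℝ) ≤ t m := mul_nonneg (hρ.eigenvalues_nonneg _) (hσ.eigenvalues_nonneg _)
      simpa using this
    have := hD.mul_mul_conjTranspose_same Wm
    rwa [← Matrix.star_eq_conjTranspose, ← hτ_eq] at this
  -- marginal spectral data
  have hτAPSD : (ptr2 τ).PosSemidef := ptr2_posSemidef hτPSD
  have hτAH : (ptr2 τ).IsHermitian := hτAPSD.1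
  set a : A → ℝ := hτAH.eigenvalues with ha_def
  set Pa : Matrix A A ℂ := (hτAH.eigenvectorUnitary : Matrix A A ℂ) with hPa_def
  have hPa : Pa ∈ Matrix.unitaryGroup A ℂ := hτAH.eigenvectorUnitary.2
  set R : Matrix (A × A) (A × A) ℂ := star Wm * (Pa ⊗ₖ Pa) with hR_def
  have hR : R ∈ Matrix.unitaryGroup (A × A) ℂ :=
    mul_mem (Unitary.star_mem hWm) (kron_mem_unitaryGroup hPa hPa)
  set c : (A × A) → (A × A) → ℝ := fun k m => Complex.normSq (R k m) with hc_def
  set τ' : Matrix (A × A) (A × A) ℂ := star (Pa ⊗ₖ Pa) * τ * (Pa ⊗ₖ Pa) with hτ'_def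
  have hτ'_eq : τ' = star R * D * R := by
    rw [hτ'_def, hR_def, hτ_eq, hWm_def]
    simp only [Matrix.star_mul, star_star, Matrix.mul_assoc]
  have hτ'PSD : τ'.PosSemidef := by
    have := hτPSD.conjTranspose_mul_mul_same (Pa ⊗ₖ Pa)
    rwa [← Matrix.star_eq_conjTranspose] at this
  set Qf : A × A → ℝ := fun m => (τ' m m).re with hQf_def
  have hQnn : ∀ m, 0 ≤ Qf m := by
    intro m
    have h := diag_nonneg_of_posSemidef hτ'PSD m
    exact (Complex.le_def.mp h).1
  have hptr2τ' : ptr2 τ' = diagonal (RCLike.ofReal ∘ a) := by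
    rw [hτ'_def, ptr2_conj τ (Matrix.mem_unitaryGroup_iff.mp hPa)]
    have := hτAH.conjStarAlgAut_star_eigenvectorUnitary; simpa using this
  have hptr1τ' : ptr1 τ' = diagonal (RCLike.ofReal ∘ a) := by
    rw [hτ'_def, ptr1_conj τ (Matrix.mem_unitaryGroup_iff.mp hPa), hcompl]
    have := hτAH.conjStarAlgAut_star_eigenvectorUnitary; simpa using this
  have hQrow : ∀ i, ∑ j, Qf (i, j) = a i := by
    intro i
    calc ∑ j, Qf (i, j) = (∑ j, τ' (i, j) (i, j)).re := by rw [Complex.re_sum]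
      _ = (ptr2 τ' i i).re := rfl
      _ = a i := by rw [hptr2τ']; simp
  have hQcol : ∀ j, ∑ i, Qf (i, j) = a j := by
    intro j
    calc ∑ i, Qf (i, j) = (∑ i, τ' (i, j) (i, j)).re := by rw [Complex.re_sum]
      _ = (ptr1 τ' j j).re := rfl
      _ = a j := by rw [hptr1τ']; simp
  have hQsum : ∀ m, ∑ k, t k * c k m = Qf m := by
    intro m
    have hτ'mm : τ' m m = ∑ k, ((t k * Complex.normSq (R k m) : ℝ) : ℂ) := by
      rw [hτ'_eq, Matrix.mul_assoc, Matrix.mul_apply]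
      apply Finset.sum_congr rfl; intro k _
      rw [Matrix.star_apply, hD_def, Matrix.diagonal_mul]
      calc star (R k m) * (((t k : ℝ) : ℂ) * R k m)
          = ((t k : ℝ) : ℂ) * (R k m * star (R k m)) := by ring
        _ = ((t k * Complex.normSq (R k m) : ℝ) : ℂ) := by
            rw [Complex.star_def, Complex.mul_conj]; push_cast; ring
    rw [hQf_def]
    simp only [hτ'mm, Complex.re_sum, Complex.ofReal_re]
    rfl
  have hrowc : ∀ k, ∑ m, c k m = 1 := by
    intro k
    have h1 : (R * star R) k k = 1 := by
      rw [Matrix.mem_unitaryGroup_iff.mp hR]; simp [Matrix.one_apply]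
    have h2 : (∑ m, ((Complex.normSq (R k m) : ℝ) : ℂ)) = 1 := by
      rw [← h1]
      simp [Matrix.mul_apply, Matrix.star_apply, Complex.star_def, Complex.mul_conj]
    have h3 := congrArg Complex.re h2
    simpa [Complex.re_sum] using h3
  have hcolc : ∀ m, ∑ k, c k m = 1 := by
    intro m
    have h1 : (star R * R) m m = 1 := by
      rw [Matrix.mem_unitaryGroup_iff'.mp hR]; simp [Matrix.one_apply]
    have h2 : (∑ k, ((Complex.normSq (R k m) : ℝ) : ℂ)) = 1 := by
      rw [← h1]
      simp only [Matrix.mul_apply, Matrix.star_apply]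
      apply Finset.sum_congr rfl; intro k _
      rw [mul_comm, Complex.star_def, Complex.mul_conj]
    have h3 := congrArg Complex.re h2
    simpa [Complex.re_sum] using h3
  have hpsum : ∑ i, p i = 1 := by
    have h := trace_eq_sum_eigenvalues hρH
    rw [hρ1] at h
    exact_mod_cast h.symm
  have hqsum : ∑ i, q i = 1 := by
    have h := trace_eq_sum_eigenvalues hσH
    rw [hσ1] at h
    exact_mod_cast h.symm
  have hτtrace : τ.trace = 1 := by
    rw [hτ_def, Matrix.trace_mul_cycle, Matrix.mem_unitaryGroup_iff'.mp hW, one_mul,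
      trace_kronecker, hρ1, hσ1, mul_one]
  have hasum : ∑ i, a i = 1 := by
    have h := trace_eq_sum_eigenvalues hτAH
    rw [ptr2_trace, hτtrace] at h
    exact_mod_cast h.symm
  have htnn : ∀ k : A × A, 0 ≤ t k :=
    fun k => mul_nonneg (hρ.eigenvalues_nonneg _) (hσ.eigenvalues_nonneg _)
  have hann : ∀ i, 0 ≤ a i := fun i => hτAPSD.eigenvalues_nonneg i
  have htsum : ∑ k : A × A, t k = 1 := by
    rw [Fintype.sum_prod_type]
    simp only [ht_def]
    rw [← Finset.sum_mul_sum]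
    rw [hpsum, hqsum, one_mul]
  have hrsum : ∑ m : A × A, a m.1 * a m.2 = 1 := by
    rw [Fintype.sum_prod_type, ← Finset.sum_mul_sum, hasum, one_mul]
  have hsupp : ∀ m : A × A, a m.1 * a m.2 = 0 → ∀ k, t k * c k m = 0 := by
    intro m hm k
    have hQ0 : Qf m = 0 := by
      have e : Qf m = Qf (m.1, m.2) := by rw [Prod.mk.eta]
      rcases mul_eq_zero.mp hm with h | h
      · have hle : Qf m ≤ a m.1 := by
          rw [← hQrow m.1, e]
          exact Finset.single_le_sum (f := fun j => Qf (m.1, j))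
            (fun j _ => hQnn _) (Finset.mem_univ m.2)
        have := hQnn m
        linarith [hle.trans_eq h]
      · have hle : Qf m ≤ a m.2 := by
          rw [← hQcol m.2, e]
          exact Finset.single_le_sum (f := fun i => Qf (i, m.2))
            (fun i _ => hQnn _) (Finset.mem_univ m.1)
        have := hQnn m
        linarith [hle.trans_eq h]
    have hsum0 : ∑ k, t k * c k m = 0 := by rw [hQsum m, hQ0]
    exact (Finset.sum_eq_zero_iff_of_nonneg
      (fun k _ => mul_nonneg (htnn k) (Complex.normSq_nonneg _))).mp hsum0 k
      (Finset.mem_univ k)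
  have key := classical_key t (fun m : A × A => a m.1 * a m.2) c htnn
    (fun m => mul_nonneg (hann _) (hann _)) (fun k m => Complex.normSq_nonneg _)
    hrowc (fun m => le_of_eq (hcolc m)) hsupp htsum (le_of_eq hrsum)
  have lhs_eq : ∑ k : A × A, negMulLog (t k) = vnEntropy ρ + vnEntropy σ := by
    simp only [vnEntropy, dif_pos hρH, dif_pos hσH, ← hp_def, ← hq_def]
    rw [Fintype.sum_prod_type]
    simp only [ht_def, negMulLog_mul]
    calc ∑ i, ∑ j, (q j * negMulLog (p i) + p i * negMulLog (q j))
        = ∑ i, ((∑ j, q j) * negMulLog (p i) + p i * ∑ j, negMulLog (q j)) := by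
          apply Finset.sum_congr rfl; intro i _
          rw [Finset.sum_add_distrib, ← Finset.sum_mul, ← Finset.mul_sum]
      _ = ∑ i, (negMulLog (p i) + p i * ∑ j, negMulLog (q j)) := by
          rw [hqsum]; simp
      _ = ∑ i, negMulLog (p i) + (∑ i, p i) * ∑ j, negMulLog (q j) := by
          rw [Finset.sum_add_distrib, ← Finset.sum_mul]
      _ = ∑ i, negMulLog (p i) + ∑ j, negMulLog (q j) := by rw [hpsum, one_mul]
  have rhs_eq : ∑ m : A × A, Qf m * (- Real.log (a m.1 * a m.2))
      = 2 * vnEntropy (ptr2 τ) := by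
    rw [marginal_sum Qf a a hQnn hQrow hQcol]
    simp only [vnEntropy, dif_pos hτAH, ← ha_def]
    ring
  have key2 : ∑ m : A × A, (∑ k, t k * c k m) * (- Real.log (a m.1 * a m.2))
      = ∑ m : A × A, Qf m * (- Real.log (a m.1 * a m.2)) := by
    apply Finset.sum_congr rfl; intro m _
    rw [hQsum m]
  rw [key2, rhs_eq] at key
  rw [lhs_eq] at key
  linarith
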